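/- There exists a multi-valued function F from Cantor space C = (ℕ → Bool) to Baire space N = (ℕ → ℕ) (each with the product topology) such that F(x) is a nonempty closed subset of N for every x ∈ C, the graph of F is a Borel (indeed Fσ) subset of C × N, and the set of points of continuity of F is an analytic subset of C which is not Borel. -/

import Mathlib

open Set
/-- A multi-valued function `F : X → Set Y` between topological spaces is continuous
at `x` if there is `y ∈ F x` such that for every open `V` containing `y` the set of
points whose value meets `V` is a neighborhood of `x`. -/
def MVContinuousAt {X Y : Type*} [TopologicalSpace X] [TopologicalSpace Y]
    (F : X → Set Y) (x : X) : Prop :=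
  ∃ y ∈ F x, ∀ V : Set Y, IsOpen V → y ∈ V → {x' | (F x' ∩ V).Nonempty} ∈ nhds x

/-- A set is `Fσ` if it is a countable union of closed sets. -/
def IsFsigma {X : Type*} [TopologicalSpace X] (S : Set X) : Prop :=
  ∃ g : ℕ → Set X, (∀ n, IsClosed (g n)) ∧ S = ⋃ n, g n

namespace MVAux

/-- cylinder lemma: cylinders are open -/
lemma isOpen_cyl {α : Type*} [TopologicalSpace α] [DiscreteTopology α] (v : ℕ → α) (m : ℕ) :
    IsOpen {z : ℕ → α | ∀ i < m, z i = v i} := by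
  have : {z : ℕ → α | ∀ i < m, z i = v i} = ⋂ i ∈ Finset.range m, {z : ℕ → α | z i = v i} := by
    ext z; simp
  rw [this]
  refine isOpen_biInter_finset (fun i _ => ?_)
  have : {z : ℕ → α | z i = v i} = (fun z : ℕ → α => z i) ⁻¹' {v i} := by ext z; simp
  rw [this]
  exact (continuous_apply i).isOpen_preimage _ (isOpen_discrete _)

lemma exists_cyl_subset {α : Type*} [TopologicalSpace α] [DiscreteTopology α]
    {V : Set (ℕ → α)} (hV : IsOpen V) {v : ℕ → α} (hv : v ∈ V) :
    ∃ m, ∀ z, (∀ i < m, z i = v i) → z ∈ V := by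
  obtain ⟨I, u, hIu, hsub⟩ := isOpen_pi_iff.1 hV v hv
  refine ⟨(I.sup id) + 1, fun z hz => hsub ?_⟩
  intro i hi
  have : z i = v i := hz i (Nat.lt_succ_of_le (Finset.le_sup (f := id) hi))
  rw [this]; exact (hIu i hi).2

lemma exists_cyl_nhds {α : Type*} [TopologicalSpace α] [DiscreteTopology α]
    {s : Set (ℕ → α)} {v : ℕ → α} (hs : s ∈ nhds v) :
    ∃ m, ∀ z, (∀ i < m, z i = v i) → z ∈ s := by
  obtain ⟨U, hUs, hU, hvU⟩ := mem_nhds_iff.1 hs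
  obtain ⟨m, hm⟩ := exists_cyl_subset hU hvU
  exact ⟨m, fun z hz => hUs (hm z hz)⟩

lemma cyl_mem_nhds {α : Type*} [TopologicalSpace α] [DiscreteTopology α] (v : ℕ → α) (m : ℕ) :
    {z : ℕ → α | ∀ i < m, z i = v i} ∈ nhds v :=
  (isOpen_cyl v m).mem_nhds (fun _ _ => rfl)

/-- initial segment of a sequence, as a list -/
def seg {α : Type*} (x : ℕ → α) (n : ℕ) : List α := (List.range n).map x

@[simp] lemma seg_length {α : Type*} (x : ℕ → α) (n : ℕ) : (seg x n).length = n := by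
  simp [seg]

@[simp] lemma seg_getElem {α : Type*} (x : ℕ → α) (n i : ℕ) (h : i < (seg x n).length) :
    (seg x n)[i] = x i := by
  simp [seg] at h ⊢

lemma seg_take {α : Type*} (x : ℕ → α) {m n : ℕ} (h : m ≤ n) :
    (seg x n).take m = seg x m := by
  apply List.ext_getElem
  · simp [seg, Nat.min_eq_left h]
  · intro i h1 h2; simp [seg]

lemma seg_eq_of_agree {α : Type*} {x y : ℕ → α} {n : ℕ} (h : ∀ i < n, x i = y i) :
    seg x n = seg y n := by
  apply List.ext_getElem <;> simp
  intro i hi; exact h i hi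

abbrev enc (p : List Bool × List ℕ) : ℕ := Encodable.encode p

/-- `t` is a node of the tree coded by `x` -/
def good (x : ℕ → Bool) (t : List ℕ) : Prop :=
  ∀ k < t.length, x (enc (seg x (k+1), t.take (k+1))) = true

lemma good_nil (x : ℕ → Bool) : good x [] := by intro k hk; simp at hk

lemma good_prefix {x : ℕ → Bool} {t u : List ℕ} (h : t <+: u) (hu : good x u) : good x t := by
  intro k hk
  have h1 : t.take (k+1) = u.take (k+1) := by
    have := List.prefix_iff_eq_take.1 h
    rw [this, List.take_take]
    congr 1
    omega
  rw [h1]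
  exact hu k (lt_of_lt_of_le hk h.length_le)

/-- membership of a fixed node is determined by finitely many coordinates -/
lemma good_local (x : ℕ → Bool) (t : List ℕ) :
    ∃ N, t.length ≤ N ∧ ∀ x' : ℕ → Bool, (∀ i < N, x' i = x i) → (good x' t ↔ good x t) := by
  refine ⟨max t.length ((Finset.range t.length).sup
      (fun k => enc (seg x (k+1), t.take (k+1)) + 1)), le_max_left _ _, fun x' hx' => ?_⟩
  have hseg : ∀ k < t.length, seg x' (k+1) = seg x (k+1) := by
    intro k hk
    exact seg_eq_of_agree (fun i hi => hx' i (lt_of_lt_of_le (by omega) (le_max_left _ _)))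
  have hcoord : ∀ k < t.length, x' (enc (seg x (k+1), t.take (k+1)))
      = x (enc (seg x (k+1), t.take (k+1))) := by
    intro k hk
    apply hx'
    have : enc (seg x (k+1), t.take (k+1)) + 1 ≤
        (Finset.range t.length).sup (fun k => enc (seg x (k+1), t.take (k+1)) + 1) :=
      Finset.le_sup (f := fun k => enc (seg x (k+1), t.take (k+1)) + 1) (Finset.mem_range.2 hk)
    omega
  constructor
  · intro h k hk
    have := h k hk
    rwa [hseg k hk, hcoord k hk] at this
  · intro h k hk
    rw [hseg k hk, hcoord k hk]
    exact h k hk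

end MVAux

namespace MVAux

lemma dichotomy (x : ℕ → Bool) (t0 : List ℕ) (h0 : good x t0) :
    (∃ y : ℕ → ℕ, (∀ n, good x (seg y n)) ∧ seg y t0.length = t0) ∨
    (∃ t, t0 <+: t ∧ good x t ∧ ∀ u : List ℕ, u.length = t.length + 1 → t <+: u → ¬ good x u) := by
  by_cases hcase : ∃ t, t0 <+: t ∧ good x t ∧ ∀ v : ℕ, ¬ good x (t ++ [v])
  · obtain ⟨t, ht0, htg, htv⟩ := hcase
    refine Or.inr ⟨t, ht0, htg, fun u hu htu hgu => ?_⟩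
    obtain ⟨r, rfl⟩ := htu
    have : r.length = 1 := by simpa using hu
    obtain ⟨a, rfl⟩ := List.length_eq_one_iff.1 this
    exact htv a hgu
  · push_neg at hcase
    -- every good extension of t0 has a good one-step extension; build a branch
    have H : ∀ t, t0 <+: t → good x t → ∃ v, good x (t ++ [v]) := hcase
    set S := {t : List ℕ // t0 <+: t ∧ good x t} with hS
    set step : S → S := fun p =>
      ⟨p.1 ++ [Classical.choose (H p.1 p.2.1 p.2.2)],
        p.2.1.trans (List.prefix_append _ _),
        Classical.choose_spec (H p.1 p.2.1 p.2.2)⟩ with hstep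
    set g : ℕ → S := fun n => step^[n] ⟨t0, List.prefix_rfl, h0⟩ with hg
    have gsucc : ∀ n, (g (n+1)).1 = (g n).1 ++
        [Classical.choose (H (g n).1 (g n).2.1 (g n).2.2)] := by
      intro n
      rw [hg]
      simp only [Function.iterate_succ_apply']
      rfl
    have glen : ∀ n, (g n).1.length = t0.length + n := by
      intro n
      induction n with
      | zero => simp [hg]
      | succ k ih => rw [gsucc k]; simp [ih]; omega
    have gmono : ∀ m n, m ≤ n → (g m).1 <+: (g n).1 := by
      intro m n hmn
      induction n with
      | zero => cases Nat.le_zero.1 hmn; exact List.prefix_rfl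
      | succ k ih =>
        rcases Nat.lt_or_ge m (k+1) with h | h
        · exact (ih (by omega)).trans (by rw [gsucc k]; exact List.prefix_append _ _)
        · have : m = k + 1 := by omega
          subst this; exact List.prefix_rfl
    set y : ℕ → ℕ := fun i => (g (i+1)).1.getD i 0 with hy
    have hsegy : ∀ n, seg y n = (g n).1.take n := by
      intro n
      apply List.ext_getElem
      · simp [glen n]
      · intro i h1 h2
        have hilen : i < (g (i+1)).1.length := by rw [glen]; omega
        have h3 : i < n := by simpa using h1
        rw [seg_getElem]
        rw [List.getElem_take]
        have := (gmono (i+1) n (by omega)).getElem hilen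
        rw [← this]
        simp only [hy]
        exact List.getD_eq_getElem _ _ hilen
    refine Or.inl ⟨y, fun n => ?_, ?_⟩
    · rw [hsegy n]
      exact good_prefix (List.take_prefix _ _) (g n).2.2
    · rw [hsegy t0.length]
      have : t0 <+: (g t0.length).1 := (g t0.length).2.1
      exact (List.prefix_iff_eq_take.1 this).symm

end MVAux

namespace MVAux

lemma exists_big_code (x : ℕ → Bool) (N : ℕ) (s : List ℕ) (j : ℕ) :
    ∃ v : ℕ, N ≤ enc (seg x j, s ++ [v]) := by
  by_contra hcon
  push_neg at hcon
  have hinj : Function.Injective (fun v : ℕ => enc (seg x j, s ++ [v])) := by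
    intro a b hab
    have := Encodable.encode_injective hab
    have : s ++ [a] = s ++ [b] := congrArg Prod.snd this
    simpa using this
  have hmem : ∀ v : ℕ, (fun v : ℕ => enc (seg x j, s ++ [v])) v ∈ Set.Iio N :=
    fun v => hcon v
  exact (Set.finite_Iio N).not_infinite (Set.infinite_of_injective_forall_mem hinj hmem)

lemma not_nbhd (x : ℕ → Bool) (t : List ℕ) (l N : ℕ) (ht : good x t) (hl : t.length < l) :
    ∃ x' : ℕ → Bool, (∀ i < N, x' i = x i) ∧
      ∃ u : List ℕ, t <+: u ∧ u.length = l ∧ good x' u := by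
  classical
  set N' := max N l with hN'
  set step2 : List ℕ → List ℕ :=
    fun s => s ++ [Classical.choose (exists_big_code x N' s (s.length + 1))] with hstep2
  set us : ℕ → List ℕ := fun j => step2^[j] t with hus
  have ussucc : ∀ j, us (j+1) = us j ++
      [Classical.choose (exists_big_code x N' (us j) ((us j).length + 1))] := by
    intro j; rw [hus]; simp only [Function.iterate_succ_apply']
    rfl
  have uslen : ∀ j, (us j).length = t.length + j := by
    intro j; induction j with
    | zero => simp [hus]
    | succ k ih => rw [ussucc k]; simp [ih]; omega
  have usmono : ∀ m n, m ≤ n → us m <+: us n := by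
    intro m n hmn
    induction n with
    | zero => cases Nat.le_zero.1 hmn; exact List.prefix_rfl
    | succ k ih =>
      rcases Nat.lt_or_ge m (k+1) with h | h
      · exact (ih (by omega)).trans (by rw [ussucc k]; exact List.prefix_append _ _)
      · have : m = k + 1 := by omega
        subst this; exact List.prefix_rfl
    -- property: big codes
  have usbig : ∀ j, N' ≤ enc (seg x ((us j).length + 1), us (j+1)) := by
    intro j
    rw [ussucc j]
    exact Classical.choose_spec (exists_big_code x N' (us j) ((us j).length + 1))
  set u := us (l - t.length) with hu
  have hulen : u.length = l := by rw [hu, uslen]; omega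
  have htu : t <+: u := by
    have := usmono 0 (l - t.length) (by omega)
    simpa [hus] using this
  have hutake : ∀ k, t.length ≤ k → k < l → u.take (k+1) = us (k + 1 - t.length) := by
    intro k hk1 hk2
    have hpre : us (k + 1 - t.length) <+: u := usmono _ _ (by omega)
    have hlen2 : (us (k + 1 - t.length)).length = k + 1 := by rw [uslen]; omega
    have := List.prefix_iff_eq_take.1 hpre
    rw [this, hlen2]
  set Flip : ℕ → Prop := fun i => ∃ k, t.length ≤ k ∧ k < l ∧
      i = enc (seg x (k+1), u.take (k+1)) with hFlip
  have flip_ge : ∀ i, Flip i → N' ≤ i := by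
    intro i ⟨k, hk1, hk2, hi⟩
    rw [hutake k hk1 hk2] at hi
    have := usbig (k - t.length)
    rw [uslen] at this
    have e1 : t.length + (k - t.length) + 1 = k + 1 := by omega
    have e2 : k - t.length + 1 = k + 1 - t.length := by omega
    rw [e1, e2] at this
    omega
  set x' : ℕ → Bool := fun i => if Flip i then true else x i with hx'
  have hagree : ∀ i < N', x' i = x i := by
    intro i hi
    rw [hx']
    simp only
    rw [if_neg]
    intro hf
    exact absurd (flip_ge i hf) (by omega)
  have hmono : ∀ i, x i = true → x' i = true := by
    intro i hxi
    rw [hx']; simp only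
    split <;> simp [hxi]
  refine ⟨x', fun i hi => hagree i (by omega), u, htu, hulen, ?_⟩
  intro k hk
  rw [hulen] at hk
  have hsegeq : seg x' (k+1) = seg x (k+1) := seg_eq_of_agree (fun i hi => hagree i (by omega))
  rw [hsegeq]
  rcases Nat.lt_or_ge k t.length with hkt | hkt
  · -- old part of u : comes from goodness of t
    have htake : u.take (k+1) = t.take (k+1) := by
      have := List.prefix_iff_eq_take.1 htu
      rw [this, List.take_take]
      congr 1
      omega
    rw [htake]
    exact hmono _ (ht k hkt)
  · -- new part: flipped coordinate
    have : Flip (enc (seg x (k+1), u.take (k+1))) := ⟨k, hkt, hk, rfl⟩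
    rw [hx']
    simp only [this, if_true]

end MVAux

namespace MVAux

/-- the point associated to a dead node `t` with death-witness length `l` -/
def qpt (t : List ℕ) (l : ℕ) : ℕ → ℕ := fun n =>
  if n < t.length then t.getD n 0 + 1 else if n = t.length then 0 else l

lemma qpt_lt {t : List ℕ} {l n : ℕ} (h : n < t.length) : qpt t l n = t.getD n 0 + 1 := by
  simp [qpt, h]

lemma qpt_len (t : List ℕ) (l : ℕ) : qpt t l t.length = 0 := by simp [qpt]

lemma qpt_gt {t : List ℕ} {l n : ℕ} (h : t.length < n) : qpt t l n = l := by
  have h1 : ¬ n < t.length := by omega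
  have h2 : ¬ n = t.length := by omega
  simp [qpt, h1, h2]

/-- pinning: a small cylinder around `qpt t l` determines `t` and `l` -/
lemma qpt_pin {t t' : List ℕ} {l l' : ℕ} (hl : t.length < l) (hl' : t'.length < l')
    (h : ∀ n < t.length + 2, qpt t' l' n = qpt t l n) : t' = t ∧ l' = l := by
  have hlen : t'.length = t.length := by
    rcases lt_trichotomy t'.length t.length with hc | hc | hc
    · have := h t'.length (by omega)
      rw [qpt_len, qpt_lt hc] at this
      omega
    · exact hc
    · have := h t.length (by omega)
      rw [qpt_len, qpt_lt hc] at this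
      omega
  constructor
  · apply List.ext_getElem hlen
    intro n h1 h2
    have := h n (by omega)
    rw [qpt_lt h1, qpt_lt h2] at this
    rw [← List.getD_eq_getElem _ 0 h1, ← List.getD_eq_getElem _ 0 h2]
    omega
  · have := h (t.length + 1) (by omega)
    rw [qpt_gt (by omega), qpt_gt (by omega)] at this
    exact this

/-- `t` is a dead node in the tree coded by `x`, with no extension of length `l` -/
def dead (x : ℕ → Bool) (t : List ℕ) (l : ℕ) : Prop :=
  good x t ∧ t.length < l ∧ ∀ u : List ℕ, u.length = l → t <+: u → ¬ good x u

/-- branch part of the multifunction -/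
def Br (x : ℕ → Bool) : Set (ℕ → ℕ) :=
  {y | (∀ n, 1 ≤ y n) ∧ ∀ n, good x (seg (fun i => y i - 1) n)}

/-- dead-node part of the multifunction -/
def Qs (x : ℕ → Bool) : Set (ℕ → ℕ) := {y | ∃ t l, dead x t l ∧ y = qpt t l}

/-- the multifunction -/
def MF (x : ℕ → Bool) : Set (ℕ → ℕ) := Br x ∪ Qs x

/-- the analytic set: codes of ill-founded (own-diagonal) trees -/
def A : Set (ℕ → Bool) := {x | ∃ y : ℕ → ℕ, ∀ n, good x (seg y n)}

lemma sub_one_comp (y : ℕ → ℕ) : (fun i => (fun n => y n + 1) i - 1) = y := by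
  funext i; simp

lemma branch_mem {x : ℕ → Bool} {y : ℕ → ℕ} (h : ∀ n, good x (seg y n)) :
    (fun n => y n + 1) ∈ Br x := by
  refine ⟨fun n => by simp, fun n => ?_⟩
  rw [sub_one_comp]
  exact h n

lemma MF_nonempty (x : ℕ → Bool) : (MF x).Nonempty := by
  rcases dichotomy x [] (good_nil x) with ⟨y, hy, _⟩ | ⟨t, _, htg, htd⟩
  · exact ⟨fun n => y n + 1, Or.inl (branch_mem hy)⟩
  · exact ⟨qpt t (t.length + 1), Or.inr ⟨t, t.length + 1, ⟨htg, by omega, htd⟩, rfl⟩⟩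

lemma MF_closed (x : ℕ → Bool) : IsClosed (MF x) := by
  apply isClosed_of_closure_subset
  intro y hy
  have hy' : ∀ m : ℕ, ∃ z ∈ MF x, ∀ i < m, z i = y i := by
    intro m
    have := mem_closure_iff.1 hy {z | ∀ i < m, z i = y i} (isOpen_cyl y m) (fun _ _ => rfl)
    obtain ⟨z, hz1, hz2⟩ := this
    exact ⟨z, hz2, hz1⟩
  by_cases h0 : ∀ n, 1 ≤ y n
  · -- y is a branch
    left
    refine ⟨h0, fun n => ?_⟩
    obtain ⟨z, hz, hzy⟩ := hy' n
    rcases hz with ⟨hz1, hz2⟩ | ⟨t, l, hdead, rfl⟩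
    · have : seg (fun i => y i - 1) n = seg (fun i => z i - 1) n :=
        seg_eq_of_agree (fun i hi => by rw [hzy i hi])
      rw [this]; exact hz2 n
    · -- z = qpt t l ; its zero position must be ≥ n
      have htn : n ≤ t.length := by
        by_contra hc
        push_neg at hc
        have := hzy t.length hc
        rw [qpt_len] at this
        have := h0 t.length
        omega
      have hseg : seg (fun i => y i - 1) n = t.take n := by
        apply List.ext_getElem
        · simp; omega
        · intro i h1 h2
          have hin : i < n := by simpa using h1
          have hit : i < t.length := by omega
          rw [seg_getElem, List.getElem_take]
          have := hzy i hin
          rw [qpt_lt hit] at this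
          rw [← List.getD_eq_getElem _ 0 hit]
          omega
      rw [hseg]
      exact good_prefix (List.take_prefix _ _) hdead.1
  · -- y has a zero; y must be a qpt point
    push_neg at h0
    have hex : ∃ n, y n = 0 := by obtain ⟨n, hn⟩ := h0; exact ⟨n, by omega⟩
    classical
    set m0 := Nat.find hex with hm0
    have hym0 : y m0 = 0 := Nat.find_spec hex
    have hylt : ∀ i < m0, y i ≠ 0 := fun i hi => Nat.find_min hex hi
    -- analyze approximating elements with index > m0
    have key : ∀ m, m0 < m → ∃ t l, dead x t l ∧ t.length = m0 ∧
        (∀ i < m, qpt t l i = y i) := by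
      intro m hm
      obtain ⟨z, hz, hzy⟩ := hy' m
      rcases hz with ⟨hz1, _⟩ | ⟨t, l, hdead, rfl⟩
      · have := hz1 m0
        have := hzy m0 hm
        omega
      · refine ⟨t, l, hdead, ?_, fun i hi => hzy i hi⟩
        rcases lt_trichotomy t.length m0 with hc | hc | hc
        · have := hzy t.length (by omega)
          rw [qpt_len] at this
          exact absurd this.symm (hylt _ hc)
        · exact hc
        · have := hzy m0 hm
          rw [qpt_lt hc] at this
          omega
    obtain ⟨t, l, hdead, htlen, hq⟩ := key (m0 + 2) (by omega)
    right
    refine ⟨t, l, hdead, ?_⟩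
    funext n
    rcases Nat.lt_or_ge n (m0 + 2) with hc | hc
    · rw [hq n hc]
    · -- tail: y n = l for all n > m0
      obtain ⟨t', l', hdead', htlen', hq'⟩ := key (n + 1) (by omega)
      have hl' : qpt t' l' n = y n := hq' n (by omega)
      rw [qpt_gt (by omega)] at hl'
      have hl'2 : qpt t' l' (m0 + 1) = y (m0 + 1) := hq' (m0+1) (by omega)
      rw [qpt_gt (by omega)] at hl'2
      have hl2 : qpt t l (m0 + 1) = y (m0 + 1) := hq (m0+1) (by omega)
      rw [qpt_gt (by omega)] at hl2
      rw [qpt_gt (by omega)]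
      omega

end MVAux

namespace MVAux

lemma seg_pointwise {α : Type*} {u v : ℕ → α} {n : ℕ} (h : seg u n = seg v n) :
    ∀ i < n, u i = v i := by
  intro i hi
  have h1 : (seg u n)[i]'(by simp [hi]) = (seg v n)[i]'(by simpa using hi) :=
    List.getElem_of_eq h _
  rwa [seg_getElem, seg_getElem] at h1

lemma cont_of_mem_A {x : ℕ → Bool} (hx : x ∈ A) : MVContinuousAt MF x := by
  obtain ⟨y, hy⟩ := hx
  refine ⟨fun n => y n + 1, Or.inl (branch_mem hy), fun V hV hwV => ?_⟩
  obtain ⟨m, hm⟩ := exists_cyl_subset hV hwV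
  obtain ⟨N, hNlen, hN⟩ := good_local x (seg y m)
  apply Filter.mem_of_superset (cyl_mem_nhds x N)
  intro x' hx'
  have hgood : good x' (seg y m) := (hN x' hx').2 (hy m)
  rcases dichotomy x' (seg y m) hgood with ⟨y', hy', hsegeq⟩ | ⟨t, hpre, htg, htd⟩
  · refine ⟨fun n => y' n + 1, Or.inl (branch_mem hy'), hm _ (fun i hi => ?_)⟩
    rw [seg_length] at hsegeq
    have : y' i = y i := seg_pointwise hsegeq i hi
    omega
  · refine ⟨qpt t (t.length+1), Or.inr ⟨t, t.length+1, ⟨htg, by omega, htd⟩, rfl⟩,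
      hm _ (fun i hi => ?_)⟩
    have him : i < t.length := by
      have := hpre.length_le
      rw [seg_length] at this
      omega
    rw [qpt_lt him]
    have h1 : t.getD i 0 = y i := by
      rw [List.getD_eq_getElem _ 0 him, ← hpre.getElem (by simp [hi] : i < (seg y m).length)]
      rw [seg_getElem]
    omega

lemma mem_A_of_cont {x : ℕ → Bool} (hx : MVContinuousAt MF x) : x ∈ A := by
  obtain ⟨w, hw, H⟩ := hx
  rcases hw with ⟨hw1, hw2⟩ | ⟨t, l, hdead, rfl⟩
  · exact ⟨fun i => w i - 1, hw2⟩
  · -- witness is a dead-node point: contradiction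
    exfalso
    set m := t.length + 2 with hm
    have hVmem := H {z | ∀ i < m, z i = qpt t l i} (isOpen_cyl _ m) (fun _ _ => rfl)
    obtain ⟨N, hN⟩ := exists_cyl_nhds hVmem
    obtain ⟨x', hx'agree, u, htu, hulen, hugood⟩ :=
      not_nbhd x t l N hdead.1 hdead.2.1
    have hx'mem := hN x' hx'agree
    obtain ⟨z, hzF, hzV⟩ := hx'mem
    rcases hzF with ⟨hz1, _⟩ | ⟨t', l', hdead', rfl⟩
    · have := hzV t.length (by omega)
      rw [qpt_len] at this
      have := hz1 t.length
      omega
    · obtain ⟨rfl, rfl⟩ := qpt_pin hdead.2.1 hdead'.2.1 hzV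
      exact hdead'.2.2 u hulen htu hugood

lemma contSet_eq : {x : ℕ → Bool | MVContinuousAt MF x} = A :=
  Set.ext fun _ => ⟨mem_A_of_cont, cont_of_mem_A⟩

end MVAux

namespace MVAux

lemma isClopen_of_local {α : Type*} [TopologicalSpace α] [DiscreteTopology α] {S : Set (ℕ → α)}
    (h : ∀ x, ∃ N, ∀ x', (∀ i < N, x' i = x i) → (x' ∈ S ↔ x ∈ S)) : IsClopen S := by
  constructor
  · rw [← isOpen_compl_iff]
    rw [isOpen_iff_mem_nhds]
    intro x hx
    obtain ⟨N, hN⟩ := h x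
    exact Filter.mem_of_superset (cyl_mem_nhds x N)
      (fun x' hx' hmem => hx ((hN x' hx').1 hmem))
  · rw [isOpen_iff_mem_nhds]
    intro x hx
    obtain ⟨N, hN⟩ := h x
    exact Filter.mem_of_superset (cyl_mem_nhds x N) (fun x' hx' => (hN x' hx').2 hx)

lemma isClopen_good (t : List ℕ) : IsClopen {x : ℕ → Bool | good x t} := by
  apply isClopen_of_local
  intro x
  obtain ⟨N, _, hN⟩ := good_local x t
  exact ⟨N, hN⟩

lemma isClosed_dead (t : List ℕ) (l : ℕ) : IsClosed {x : ℕ → Bool | dead x t l} := by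
  by_cases hl : t.length < l
  · have : {x : ℕ → Bool | dead x t l} = {x : ℕ → Bool | good x t} ∩
        ⋂ u : List ℕ, {x : ℕ → Bool | u.length = l → t <+: u → ¬ good x u} := by
      ext x
      simp only [dead, Set.mem_setOf_eq, Set.mem_inter_iff, Set.mem_iInter]
      tauto
    rw [this]
    refine IsClosed.inter (isClopen_good t).1 (isClosed_iInter fun u => ?_)
    by_cases hu : u.length = l ∧ t <+: u
    · have : {x : ℕ → Bool | u.length = l → t <+: u → ¬ good x u}
          = {x : ℕ → Bool | good x u}ᶜ := by
        ext x; simp [hu.1, hu.2]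
      rw [this]
      exact (isClopen_good u).2.isClosed_compl
    · have : {x : ℕ → Bool | u.length = l → t <+: u → ¬ good x u} = Set.univ := by
        ext x; simp only [Set.mem_setOf_eq, Set.mem_univ, iff_true]
        intro h1 h2
        exact absurd ⟨h1, h2⟩ hu
      rw [this]
      exact isClosed_univ
  · have : {x : ℕ → Bool | dead x t l} = ∅ := by
      ext x; simp only [dead, Set.mem_setOf_eq, Set.mem_empty_iff_false, iff_false]
      tauto
    rw [this]; exact isClosed_empty

/-- product cylinder sets -/
lemma cyl2_mem_nhds (p : (ℕ → Bool) × (ℕ → ℕ)) (m : ℕ) :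
    {q : (ℕ → Bool) × (ℕ → ℕ) | (∀ i < m, q.1 i = p.1 i) ∧ ∀ i < m, q.2 i = p.2 i}
      ∈ nhds p := by
  have : {q : (ℕ → Bool) × (ℕ → ℕ) | (∀ i < m, q.1 i = p.1 i) ∧ ∀ i < m, q.2 i = p.2 i}
      = {z : ℕ → Bool | ∀ i < m, z i = p.1 i} ×ˢ {z : ℕ → ℕ | ∀ i < m, z i = p.2 i} := by
    ext q; simp [Set.mem_prod]
  rw [this]
  exact ((isOpen_cyl p.1 m).prod (isOpen_cyl p.2 m)).mem_nhds ⟨fun _ _ => rfl, fun _ _ => rfl⟩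

lemma isClosed_Bgraph : IsClosed {p : (ℕ → Bool) × (ℕ → ℕ) | p.2 ∈ Br p.1} := by
  rw [← isOpen_compl_iff, isOpen_iff_mem_nhds]
  intro p hp
  simp only [Set.mem_compl_iff, Set.mem_setOf_eq, Br] at hp
  by_cases h1 : ∀ n, 1 ≤ p.2 n
  · have h2 : ∃ n, ¬ good p.1 (seg (fun i => p.2 i - 1) n) := by
      by_contra hc; push_neg at hc
      exact hp ⟨h1, hc⟩
    obtain ⟨n, hn⟩ := h2
    obtain ⟨N, hNlen, hN⟩ := good_local p.1 (seg (fun i => p.2 i - 1) n)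
    apply Filter.mem_of_superset (cyl2_mem_nhds p (max N n))
    rintro q ⟨hq1, hq2⟩
    simp only [Set.mem_compl_iff, Set.mem_setOf_eq, Br]
    rintro ⟨hb1, hb2⟩
    apply hn
    have hseg : seg (fun i => q.2 i - 1) n = seg (fun i => p.2 i - 1) n :=
      seg_eq_of_agree (fun i hi => by rw [hq2 i (by omega)])
    have := hb2 n
    rw [hseg] at this
    exact (hN q.1 (fun i hi => hq1 i (by omega))).1 this
  · push_neg at h1
    obtain ⟨n, hn⟩ := h1
    apply Filter.mem_of_superset (cyl2_mem_nhds p (n+1))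
    rintro q ⟨hq1, hq2⟩
    simp only [Set.mem_compl_iff, Set.mem_setOf_eq, Br]
    rintro ⟨hb1, _⟩
    have := hb1 n
    rw [hq2 n (by omega)] at this
    omega

lemma graph_Fsigma : IsFsigma {p : (ℕ → Bool) × (ℕ → ℕ) | p.2 ∈ MF p.1} := by
  classical
  set d : ℕ → List ℕ × ℕ := Denumerable.ofNat (List ℕ × ℕ) with hd
  refine ⟨fun n => {p : (ℕ → Bool) × (ℕ → ℕ) | p.2 ∈ Br p.1} ∪
      ({x : ℕ → Bool | dead x (d n).1 (d n).2} ×ˢ ({qpt (d n).1 (d n).2} : Set (ℕ → ℕ))),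
    fun n => isClosed_Bgraph.union ((isClosed_dead _ _).prod isClosed_singleton), ?_⟩
  ext p
  simp only [Set.mem_setOf_eq, MF, Set.mem_union, Set.mem_iUnion, Set.mem_prod,
    Set.mem_singleton_iff]
  constructor
  · rintro (hb | ⟨t, l, hdead, heq⟩)
    · exact ⟨0, Or.inl hb⟩
    · refine ⟨Encodable.encode (t, l), Or.inr ?_⟩
      rw [hd]
      simp only [Denumerable.ofNat_encode]
      exact ⟨hdead, heq⟩
  · rintro ⟨n, hn | ⟨hdead, heq⟩⟩
    · exact Or.inl hn
    · exact Or.inr ⟨(d n).1, (d n).2, hdead, heq⟩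

end MVAux

namespace MVAux

open MeasureTheory

lemma isClosed_D : IsClosed {p : (ℕ → Bool) × (ℕ → ℕ) | ∀ n, good p.1 (seg p.2 n)} := by
  rw [← isOpen_compl_iff, isOpen_iff_mem_nhds]
  intro p hp
  simp only [Set.mem_compl_iff, Set.mem_setOf_eq] at hp
  push_neg at hp
  obtain ⟨n, hn⟩ := hp
  obtain ⟨N, hNlen, hN⟩ := good_local p.1 (seg p.2 n)
  apply Filter.mem_of_superset (cyl2_mem_nhds p (max N n))
  rintro q ⟨hq1, hq2⟩
  simp only [Set.mem_compl_iff, Set.mem_setOf_eq]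
  push_neg
  refine ⟨n, fun hg => hn ?_⟩
  have hseg : seg q.2 n = seg p.2 n := seg_eq_of_agree (fun i hi => hq2 i (by omega))
  rw [hseg] at hg
  exact (hN q.1 (fun i hi => hq1 i (by omega))).1 hg

lemma analytic_A : AnalyticSet A := by
  have himg : A = Prod.fst '' {p : (ℕ → Bool) × (ℕ → ℕ) | ∀ n, good p.1 (seg p.2 n)} := by
    ext x
    simp only [Set.mem_image, Set.mem_setOf_eq, A]
    constructor
    · rintro ⟨y, hy⟩; exact ⟨(x, y), hy, rfl⟩
    · rintro ⟨⟨x', y⟩, hy, rfl⟩; exact ⟨y, hy⟩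
  rw [himg]
  haveI : SecondCountableTopology Bool := DiscreteTopology.secondCountableTopology_of_countable
  exact isClosed_D.analyticSet.image_of_continuous continuous_fst

lemma mem_A_iff (x : ℕ → Bool) :
    x ∈ A ↔ ∃ y : ℕ → ℕ, ∀ k, x (enc (seg x (k+1), seg y (k+1))) = true := by
  constructor
  · rintro ⟨y, hy⟩
    refine ⟨y, fun k => ?_⟩
    have := hy (k+1) k (by simp)
    rwa [seg_take y (le_refl (k+1))] at this
  · rintro ⟨y, hy⟩
    refine ⟨y, fun n k hk => ?_⟩
    rw [seg_length] at hk
    rw [seg_take y (by omega : k + 1 ≤ n)]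
    exact hy k

lemma universal {S : Set (ℕ → Bool)} (hS : AnalyticSet S) :
    ∃ c : ℕ → Bool, ∀ x, x ∈ S ↔
      ∃ y : ℕ → ℕ, ∀ k, c (enc (seg x (k+1), seg y (k+1))) = true := by
  classical
  rw [AnalyticSet_def] at hS
  rcases hS with rfl | ⟨f, fc, rfl⟩
  · refine ⟨fun _ => false, fun x => ?_⟩
    simp
  · refine ⟨fun n => if ∃ z : ℕ → ℕ, ∃ k : ℕ, n = enc (seg (f z) (k+1), seg z (k+1))
      then true else false, fun x => ?_⟩
    constructor
    · rintro ⟨z, rfl⟩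
      refine ⟨z, fun k => ?_⟩
      exact if_pos ⟨z, k, rfl⟩
    · rintro ⟨y, hy⟩
      have hzk : ∀ k : ℕ, ∃ z : ℕ → ℕ,
          seg (f z) (k+1) = seg x (k+1) ∧ seg z (k+1) = seg y (k+1) := by
        intro k
        have h1 := hy k
        by_cases hcond : ∃ z : ℕ → ℕ, ∃ k' : ℕ,
            enc (seg x (k+1), seg y (k+1)) = enc (seg (f z) (k'+1), seg z (k'+1))
        · obtain ⟨z, k', henc⟩ := hcond
          have hpair := Encodable.encode_injective henc
          have hfst : seg x (k+1) = seg (f z) (k'+1) := congrArg Prod.fst hpair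
          have hsnd : seg y (k+1) = seg z (k'+1) := congrArg Prod.snd hpair
          have hkk : k' = k := by
            have := congrArg List.length hfst
            simpa using this.symm
          subst hkk
          exact ⟨z, hfst.symm, hsnd.symm⟩
        · have h1' : (if ∃ z : ℕ → ℕ, ∃ k' : ℕ,
              enc (seg x (k+1), seg y (k+1)) = enc (seg (f z) (k'+1), seg z (k'+1))
              then true else false) = true := h1
          rw [if_neg hcond] at h1'
          exact absurd h1' (by simp)
      suffices hfy : f y = x by exact ⟨y, hfy⟩
      funext j
      have hWopen : IsOpen {w : ℕ → Bool | w j = f y j} := by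
        have : {w : ℕ → Bool | w j = f y j} = (fun w : ℕ → Bool => w j) ⁻¹' {f y j} := by
          ext w; simp
        rw [this]
        exact (continuous_apply j).isOpen_preimage _ (isOpen_discrete _)
      have hyW : y ∈ f ⁻¹' {w : ℕ → Bool | w j = f y j} := rfl
      obtain ⟨m, hm⟩ := exists_cyl_subset (hWopen.preimage fc) hyW
      obtain ⟨z, hz1, hz2⟩ := hzk (max m j)
      have hzy : ∀ i < m, z i = y i := fun i hi =>
        seg_pointwise hz2 i (by omega)
      have h3 : f z j = f y j := hm z hzy
      have h4 : f z j = x j := seg_pointwise hz1 j (by omega)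
      rw [← h3, h4]

lemma not_borel_A : ¬ @MeasurableSet _ (borel (ℕ → Bool)) A := by
  intro h
  letI : MeasurableSpace (ℕ → Bool) := borel _
  haveI : BorelSpace (ℕ → Bool) := ⟨rfl⟩
  haveI : SecondCountableTopology Bool := DiscreteTopology.secondCountableTopology_of_countable
  have hc : AnalyticSet Aᶜ := (MeasurableSet.compl h).analyticSet
  obtain ⟨c, hc2⟩ := universal hc
  have h1 := hc2 c
  have h2 := mem_A_iff c
  rw [Set.mem_compl_iff] at h1
  tauto

end MVAux

theorem exists_multivalued_function_continuity_set_analytic_not_Borel :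
    ∃ F : (ℕ → Bool) → Set (ℕ → ℕ),
      (∀ x, (F x).Nonempty) ∧ (∀ x, IsClosed (F x)) ∧
      IsFsigma {p : (ℕ → Bool) × (ℕ → ℕ) | p.2 ∈ F p.1} ∧
      MeasureTheory.AnalyticSet {x : ℕ → Bool | MVContinuousAt F x} ∧
      ¬ @MeasurableSet _ (borel (ℕ → Bool)) {x : ℕ → Bool | MVContinuousAt F x} := by
  refine ⟨MVAux.MF, MVAux.MF_nonempty, MVAux.MF_closed, MVAux.graph_Fsigma, ?_, ?_⟩
  · rw [MVAux.contSet_eq]; exact MVAux.analytic_A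
  · rw [MVAux.contSet_eq]; exact MVAux.not_borel_A
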